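/- For P, Q ∈ Γ_n with 0 < r ≤ p_i/q_i ≤ R for all i, (2/(1+R²))·T(P||Q) ≤ G(P||Q) ≤ (2/(1+r²))·T(P||Q), where G(P||Q) = ∑((p_i+q_i)/2)ln((p_i+q_i)/(2p_i)) and T(P||Q) = ∑((p_i+q_i)/2)ln((p_i+q_i)/(2√(p_i q_i))). -/

import Mathlib

open Finset Real


noncomputable def phi (a x : ℝ) : ℝ :=
  ((x+1)/2)*(Real.log (x+1) - Real.log 2 - Real.log x)
  - (2/(1+a^2)) * (((x+1)/2)*(Real.log (x+1) - Real.log 2 - (1/2)*Real.log x))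
  + (x-1)/2

noncomputable def phi' (a x : ℝ) : ℝ :=
  ((1/2)*(Real.log (x+1) - Real.log 2 - Real.log x) + ((x+1)/2)*((x+1)⁻¹ - x⁻¹))
  - (2/(1+a^2)) * ((1/2)*(Real.log (x+1) - Real.log 2 - (1/2)*Real.log x) + ((x+1)/2)*((x+1)⁻¹ - (1/2)*x⁻¹))
  + 1/2

lemma hasDerivAt_phi (a : ℝ) {x : ℝ} (hx : 0 < x) : HasDerivAt (phi a) (phi' a x) x := by
  have hx1 : (0:ℝ) < x + 1 := by linarith
  have h1 : HasDerivAt (fun y : ℝ => y + 1) 1 x := (hasDerivAt_id x).add_const 1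
  have hL1 : HasDerivAt (fun y : ℝ => Real.log (y+1)) (1/(x+1)) x := h1.log hx1.ne'
  have hL2 : HasDerivAt Real.log x⁻¹ x := Real.hasDerivAt_log hx.ne'
  have hA : HasDerivAt (fun y : ℝ => (y+1)/2) (1/2) x := h1.div_const 2
  have hF1 : HasDerivAt (fun y : ℝ => Real.log (y+1) - Real.log 2 - Real.log y)
      (1/(x+1) - x⁻¹) x := (hL1.sub_const _).sub hL2
  have hF2 : HasDerivAt (fun y : ℝ => Real.log (y+1) - Real.log 2 - (1/2)*Real.log y)
      (1/(x+1) - (1/2)*x⁻¹) x := (hL1.sub_const _).sub (hL2.const_mul (1/2))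
  have hP1 := hA.mul hF1
  have hP2 := (hA.mul hF2).const_mul (2/(1+a^2))
  have hP3 : HasDerivAt (fun y : ℝ => (y-1)/2) (1/2) x := ((hasDerivAt_id x).sub_const 1).div_const 2
  have H := (hP1.sub hP2).add hP3
  refine H.congr_deriv ?_
  have h2 : (x:ℝ) + 1 ≠ 0 := hx1.ne'
  unfold phi'
  field_simp [phi']
  try ring

lemma hasDerivAt_phi' (a : ℝ) {x : ℝ} (hx : 0 < x) :
    HasDerivAt (phi' a) ((a^2 - x^2)/(2*x^2*(x+1)*(1+a^2))) x := by
  have hx1 : (0:ℝ) < x + 1 := by linarith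
  have h1 : HasDerivAt (fun y : ℝ => y + 1) 1 x := (hasDerivAt_id x).add_const 1
  have hL1 : HasDerivAt (fun y : ℝ => Real.log (y+1)) (1/(x+1)) x := h1.log hx1.ne'
  have hL2 : HasDerivAt Real.log x⁻¹ x := Real.hasDerivAt_log hx.ne'
  have hA : HasDerivAt (fun y : ℝ => (y+1)/2) (1/2) x := h1.div_const 2
  have hI1 : HasDerivAt (fun y : ℝ => (y+1)⁻¹) (-1/(x+1)^2) x := by
    exact h1.fun_inv hx1.ne'
  have hI2 : HasDerivAt (fun y : ℝ => y⁻¹) (-(x^2)⁻¹) x := hasDerivAt_inv hx.ne'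
  have hF1 : HasDerivAt (fun y : ℝ => Real.log (y+1) - Real.log 2 - Real.log y)
      (1/(x+1) - x⁻¹) x := (hL1.sub_const _).sub hL2
  have hF2 : HasDerivAt (fun y : ℝ => Real.log (y+1) - Real.log 2 - (1/2)*Real.log y)
      (1/(x+1) - (1/2)*x⁻¹) x := (hL1.sub_const _).sub (hL2.const_mul (1/2))
  have hG1 : HasDerivAt (fun y : ℝ => (y+1)⁻¹ - y⁻¹) (-1/(x+1)^2 - -(x^2)⁻¹) x := hI1.sub hI2
  have hG2 : HasDerivAt (fun y : ℝ => (y+1)⁻¹ - (1/2)*y⁻¹) (-1/(x+1)^2 - (1/2)*(-(x^2)⁻¹)) x :=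
    hI1.sub (hI2.const_mul (1/2))
  have hP1 := (hF1.const_mul (1/2)).add (hA.mul hG1)
  have hP2 := ((hF2.const_mul (1/2)).add (hA.mul hG2)).const_mul (2/(1+a^2))
  have H := ((hP1.sub hP2).add_const (1/2 : ℝ))
  refine H.congr_deriv ?_
  have h2 : (x:ℝ) + 1 ≠ 0 := hx1.ne'
  have h3 : (1:ℝ) + a^2 ≠ 0 := by positivity
  field_simp
  ring

lemma phi_one (a : ℝ) : phi a 1 = 0 := by
  norm_num [phi]

lemma phi'_one (a : ℝ) : phi' a 1 = 0 := by
  norm_num [phi']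

lemma phi_nonneg (a : ℝ) (ha : 1 ≤ a) {x : ℝ} (hx : 0 < x) (hxa : x ≤ a) : 0 ≤ phi a x := by
  have hmono : StrictMonoOn (phi' a) (Set.Ioc 0 a) := by
    apply strictMonoOn_of_deriv_pos (convex_Ioc 0 a)
    · exact fun y hy => ((hasDerivAt_phi' a hy.1).continuousAt).continuousWithinAt
    · intro y hy
      rw [interior_Ioc] at hy
      rw [(hasDerivAt_phi' a hy.1).deriv]
      apply div_pos
      · nlinarith [hy.1, hy.2]
      · have h1 : (0:ℝ) < y + 1 := by linarith [hy.1]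
        have h2 : (0:ℝ) < y := hy.1
        positivity
  have h1mem : (1:ℝ) ∈ Set.Ioc (0:ℝ) a := ⟨one_pos, ha⟩
  have hsign1 : ∀ y ∈ Set.Ioo (0:ℝ) 1, phi' a y < 0 := by
    intro y hy
    have := hmono ⟨hy.1, hy.2.le.trans ha⟩ h1mem hy.2
    rwa [phi'_one] at this
  have hsign2 : ∀ y ∈ Set.Ioo (1:ℝ) a, 0 < phi' a y := by
    intro y hy
    have := hmono h1mem ⟨lt_trans one_pos hy.1, hy.2.le⟩ hy.1
    rwa [phi'_one] at this
  have hanti : AntitoneOn (phi a) (Set.Ioc 0 1) := by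
    apply antitoneOn_of_deriv_nonpos (convex_Ioc 0 1)
    · exact fun y hy => ((hasDerivAt_phi a hy.1).continuousAt).continuousWithinAt
    · intro y hy
      rw [interior_Ioc] at hy
      exact ((hasDerivAt_phi a hy.1).differentiableAt).differentiableWithinAt
    · intro y hy
      rw [interior_Ioc] at hy
      rw [(hasDerivAt_phi a hy.1).deriv]
      exact (hsign1 y hy).le
  have hmono2 : MonotoneOn (phi a) (Set.Icc 1 a) := by
    apply monotoneOn_of_deriv_nonneg (convex_Icc 1 a)
    · exact fun y hy => ((hasDerivAt_phi a (lt_of_lt_of_le one_pos hy.1)).continuousAt).continuousWithinAt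
    · intro y hy
      rw [interior_Icc] at hy
      exact ((hasDerivAt_phi a (lt_trans one_pos hy.1)).differentiableAt).differentiableWithinAt
    · intro y hy
      rw [interior_Icc] at hy
      rw [(hasDerivAt_phi a (lt_trans one_pos hy.1)).deriv]
      exact (hsign2 y hy).le
  rcases le_or_gt x 1 with h | h
  · have := hanti ⟨hx, h⟩ ⟨one_pos, le_refl 1⟩ h
    rwa [phi_one] at this
  · have := hmono2 ⟨le_refl 1, ha⟩ ⟨h.le, hxa⟩ h.le
    rwa [phi_one] at this

lemma phi_nonpos (a : ℝ) (ha0 : 0 < a) (ha : a ≤ 1) {x : ℝ} (hx : a ≤ x) : phi a x ≤ 0 := by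
  have hx0 : 0 < x := lt_of_lt_of_le ha0 hx
  have hanti : StrictAntiOn (phi' a) (Set.Ici a) := by
    apply strictAntiOn_of_deriv_neg (convex_Ici a)
    · exact fun y hy => ((hasDerivAt_phi' a (lt_of_lt_of_le ha0 hy)).continuousAt).continuousWithinAt
    · intro y hy
      rw [interior_Ici] at hy
      have hy0 : 0 < y := lt_trans ha0 hy
      have hay : a < y := hy
      rw [(hasDerivAt_phi' a hy0).deriv]
      apply div_neg_of_neg_of_pos
      · nlinarith
      · have h1 : (0:ℝ) < y + 1 := by linarith
        positivity
  have h1mem : (1:ℝ) ∈ Set.Ici a := ha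
  have hsign1 : ∀ y ∈ Set.Ico a 1, 0 < phi' a y := by
    intro y hy
    have := hanti hy.1 h1mem hy.2
    rwa [phi'_one] at this
  have hsign2 : ∀ y ∈ Set.Ioi (1:ℝ), phi' a y < 0 := by
    intro y hy
    have := hanti h1mem (le_of_lt (lt_of_le_of_lt ha hy)) hy
    rwa [phi'_one] at this
  have hmono2 : MonotoneOn (phi a) (Set.Icc a 1) := by
    apply monotoneOn_of_deriv_nonneg (convex_Icc a 1)
    · exact fun y hy => ((hasDerivAt_phi a (lt_of_lt_of_le ha0 hy.1)).continuousAt).continuousWithinAt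
    · intro y hy
      rw [interior_Icc] at hy
      exact ((hasDerivAt_phi a (lt_trans ha0 hy.1)).differentiableAt).differentiableWithinAt
    · intro y hy
      rw [interior_Icc] at hy
      rw [(hasDerivAt_phi a (lt_trans ha0 hy.1)).deriv]
      exact (hsign1 y ⟨hy.1.le, hy.2⟩).le
  have hanti2 : AntitoneOn (phi a) (Set.Ici 1) := by
    apply antitoneOn_of_deriv_nonpos (convex_Ici 1)
    · exact fun y hy => ((hasDerivAt_phi a (lt_of_lt_of_le one_pos hy)).continuousAt).continuousWithinAt
    · intro y hy
      rw [interior_Ici] at hy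
      exact ((hasDerivAt_phi a (lt_trans one_pos hy)).differentiableAt).differentiableWithinAt
    · intro y hy
      rw [interior_Ici] at hy
      rw [(hasDerivAt_phi a (lt_trans one_pos hy)).deriv]
      exact (hsign2 y hy).le
  rcases le_or_gt x 1 with h | h
  · have := hmono2 ⟨hx, h⟩ ⟨ha, le_refl 1⟩ h
    rwa [phi_one] at this
  · have := hanti2 (Set.mem_Ici.2 (le_refl 1)) (Set.mem_Ici.2 h.le) h.le
    rwa [phi_one] at this

lemma term_eq (a p q : ℝ) (hp : 0 < p) (hq : 0 < q) :
    q * phi a (p/q) = ((p+q)/2)*Real.log ((p+q)/(2*p))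
      - (2/(1+a^2)) * (((p+q)/2)*Real.log ((p+q)/(2*Real.sqrt (p*q)))) + (p-q)/2 := by
  have hpq : (0:ℝ) < p + q := by linarith
  have h1 : p/q + 1 = (p+q)/q := by field_simp
  have hs : 0 < Real.sqrt (p*q) := Real.sqrt_pos.2 (by positivity)
  rw [phi, h1, Real.log_div hpq.ne' hq.ne', Real.log_div hp.ne' hq.ne',
      Real.log_div hpq.ne' (by positivity : (2*p:ℝ) ≠ 0),
      Real.log_div hpq.ne' (by positivity : (2*Real.sqrt (p*q):ℝ) ≠ 0),
      Real.log_mul two_ne_zero hp.ne',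
      Real.log_mul two_ne_zero hs.ne',
      Real.log_sqrt (by positivity : (0:ℝ) ≤ p*q),
      Real.log_mul hp.ne' hq.ne']
  have h3 : (1:ℝ) + a^2 ≠ 0 := by positivity
  field_simp
  ring


theorem stmt16 (n : ℕ) (p q : Fin n → ℝ)
    (hp : ∀ i, 0 < p i) (hq : ∀ i, 0 < q i)
    (hp1 : ∑ i, p i = 1) (hq1 : ∑ i, q i = 1)
    (r R : ℝ) (hr : 0 < r) (hrR : ∀ i, r ≤ p i / q i ∧ p i / q i ≤ R) :
    (2/(1+R^2)) * (∑ i, ((p i + q i)/2) * Real.log ((p i + q i) / (2 * Real.sqrt (p i * q i)))) ≤ (∑ i, ((p i + q i)/2) * Real.log ((p i + q i) / (2 * p i))) ∧ (∑ i, ((p i + q i)/2) * Real.log ((p i + q i) / (2 * p i))) ≤ (2/(1+r^2)) * (∑ i, ((p i + q i)/2) * Real.log ((p i + q i) / (2 * Real.sqrt (p i * q i)))) := by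
  have hx : ∀ i, 0 < p i / q i := fun i => div_pos (hp i) (hq i)
  have hR1 : 1 ≤ R := by
    calc (1:ℝ) = ∑ i, p i := hp1.symm
      _ ≤ ∑ i, R * q i := Finset.sum_le_sum (fun i _ => by
          have := (hrR i).2; rw [div_le_iff₀ (hq i)] at this; linarith)
      _ = R := by rw [← Finset.mul_sum, hq1, mul_one]
  have hr1 : r ≤ 1 := by
    calc r = ∑ i, r * q i := by rw [← Finset.mul_sum, hq1, mul_one]
      _ ≤ ∑ i, p i := Finset.sum_le_sum (fun i _ => by
          have := (hrR i).1; rw [le_div_iff₀ (hq i)] at this; linarith)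
      _ = 1 := hp1
  have hsum : ∀ a : ℝ, ∑ i, q i * phi a (p i / q i)
      = (∑ i, ((p i + q i)/2) * Real.log ((p i + q i) / (2 * p i)))
        - (2/(1+a^2)) * (∑ i, ((p i + q i)/2) * Real.log ((p i + q i) / (2 * Real.sqrt (p i * q i)))) := by
    intro a
    calc ∑ i, q i * phi a (p i / q i)
        = ∑ i, (((p i + q i)/2)*Real.log ((p i + q i)/(2*p i))
            - (2/(1+a^2)) * (((p i + q i)/2)*Real.log ((p i + q i)/(2*Real.sqrt (p i * q i))))
            + (p i - q i)/2) :=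
          Finset.sum_congr rfl (fun i _ => term_eq a (p i) (q i) (hp i) (hq i))
      _ = _ := by
          rw [Finset.sum_add_distrib, Finset.sum_sub_distrib, ← Finset.mul_sum,
            ← Finset.sum_div, Finset.sum_sub_distrib, hp1, hq1]
          norm_num
  have key1 : 0 ≤ ∑ i, q i * phi R (p i / q i) :=
    Finset.sum_nonneg fun i _ => mul_nonneg (hq i).le (phi_nonneg R hR1 (hx i) (hrR i).2)
  have key2 : ∑ i, q i * phi r (p i / q i) ≤ 0 :=
    Finset.sum_nonpos fun i _ =>
      mul_nonpos_of_nonneg_of_nonpos (hq i).le (phi_nonpos r hr hr1 (hrR i).1)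
  rw [hsum R] at key1
  rw [hsum r] at key2
  constructor <;> linarith
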